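/- In ℝ², let C₁ = ℝ₊² (the nonnegative orthant) and C₂ = (-ℝ₊)² (the nonpositive orthant), so C₁ ∩ C₂ = {(0,0)}. If x₀ = (ζ, ξ) ≠ (0,0), then the sequence generated alternately by reflectors R_{C₁} and R_{C₂} (x₁ = R_{C₁}x₀, x₂ = R_{C₂}x₁, x₃ = R_{C₁}x₂, ...) cycles between the two points (|ζ|, |ξ|) and (-|ζ|, -|ξ|) and hence does not converge. -/

import Mathlib

open Metric Set Filter

/-- The metric projection of `x` onto `C`, as a set. -/
noncomputable def projSet {X : Type*} [NormedAddCommGroup X]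
    (C : Set X) (x : X) : Set X :=
  {p | p ∈ C ∧ dist x p = Metric.infDist x C}

/-- The reflector `R_C := 2 P_C - Id`, as a set-valued map. -/
noncomputable def reflSet {X : Type*} [NormedAddCommGroup X] [Module ℝ X]
    (C : Set X) (x : X) : Set X :=
  {y | ∃ p ∈ projSet C x, y = (2 : ℝ) • p - x}

lemma sq_max_le' (t s : ℝ) (hs : 0 ≤ s) : (t - max t 0)^2 ≤ (t - s)^2 := by
  rcases le_total t 0 with h|h
  · rw [max_eq_right h]; nlinarith
  · rw [max_eq_left h]; nlinarith

lemma eq_max_of_sq' (t s : ℝ) (hs : 0 ≤ s) (h : (t - s)^2 = (t - max t 0)^2) :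
    s = max t 0 := by
  rcases le_total t 0 with ht|ht
  · rw [max_eq_right ht] at *
    apply le_antisymm _ hs; nlinarith
  · rw [max_eq_left ht] at *
    have h0 : (t - s)^2 = 0 := by rw [h]; ring
    have := pow_eq_zero_iff (n := 2) (by norm_num) |>.mp h0
    linarith

lemma sq_min_le' (t s : ℝ) (hs : s ≤ 0) : (t - min t 0)^2 ≤ (t - s)^2 := by
  rcases le_total t 0 with h|h
  · rw [min_eq_left h]; nlinarith
  · rw [min_eq_right h]; nlinarith

lemma eq_min_of_sq' (t s : ℝ) (hs : s ≤ 0) (h : (t - s)^2 = (t - min t 0)^2) :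
    s = min t 0 := by
  rcases le_total t 0 with ht|ht
  · rw [min_eq_left ht] at *
    have h0 : (t - s)^2 = 0 := by rw [h]; ring
    have := pow_eq_zero_iff (n := 2) (by norm_num) |>.mp h0
    linarith
  · rw [min_eq_right ht] at *
    apply le_antisymm hs; nlinarith

lemma dist_sq' (v w : EuclideanSpace ℝ (Fin 2)) :
    dist v w = Real.sqrt ((v 0 - w 0)^2 + (v 1 - w 1)^2) := by
  rw [EuclideanSpace.dist_eq, Fin.sum_univ_two]
  simp [Real.dist_eq, sq_abs]

lemma proj_C1 (v p : EuclideanSpace ℝ (Fin 2))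
    (hp : p ∈ projSet {v : EuclideanSpace ℝ (Fin 2) | 0 ≤ v 0 ∧ 0 ≤ v 1} v) :
    ∀ i, p i = max (v i) 0 := by
  set C : Set (EuclideanSpace ℝ (Fin 2)) := {v | 0 ≤ v 0 ∧ 0 ≤ v 1} with hC
  set q : EuclideanSpace ℝ (Fin 2) := WithLp.toLp 2 (fun i => max (v i) 0) with hq
  have hqC : q ∈ C := ⟨le_max_right _ _, le_max_right _ _⟩
  have hle : ∀ r ∈ C, dist v q ≤ dist v r := by
    intro r hr
    rw [dist_sq', dist_sq']
    apply Real.sqrt_le_sqrt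
    have h0 := sq_max_le' (v 0) (r 0) hr.1
    have h1 := sq_max_le' (v 1) (r 1) hr.2
    simp only [hq, PiLp.toLp_apply]
    linarith
  have hinf : infDist v C = dist v q := by
    apply le_antisymm (infDist_le_dist_of_mem hqC)
    by_contra hlt
    push_neg at hlt
    obtain ⟨r, hrC, hrd⟩ := (infDist_lt_iff ⟨q, hqC⟩).mp hlt
    exact absurd hrd (not_lt.mpr (hle r hrC))
  obtain ⟨hpC, hpd⟩ := hp
  rw [hinf] at hpd
  rw [dist_sq', dist_sq'] at hpd
  have hnn : ∀ a b : ℝ, 0 ≤ a^2 + b^2 := fun a b => by positivity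
  have hsum : (v 0 - p 0)^2 + (v 1 - p 1)^2
      = (v 0 - q 0)^2 + (v 1 - q 1)^2 :=
    (Real.sqrt_inj (hnn _ _) (hnn _ _)).mp hpd
  have h0 := sq_max_le' (v 0) (p 0) hpC.1
  have h1 := sq_max_le' (v 1) (p 1) hpC.2
  have e0 : (v 0 - p 0)^2 = (v 0 - max (v 0) 0)^2 := by
    simp only [hq, PiLp.toLp_apply] at hsum; linarith
  have e1 : (v 1 - p 1)^2 = (v 1 - max (v 1) 0)^2 := by
    simp only [hq, PiLp.toLp_apply] at hsum; linarith
  intro i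
  fin_cases i
  · exact eq_max_of_sq' _ _ hpC.1 e0
  · exact eq_max_of_sq' _ _ hpC.2 e1

lemma proj_C2 (v p : EuclideanSpace ℝ (Fin 2))
    (hp : p ∈ projSet {v : EuclideanSpace ℝ (Fin 2) | v 0 ≤ 0 ∧ v 1 ≤ 0} v) :
    ∀ i, p i = min (v i) 0 := by
  set C : Set (EuclideanSpace ℝ (Fin 2)) := {v | v 0 ≤ 0 ∧ v 1 ≤ 0} with hC
  set q : EuclideanSpace ℝ (Fin 2) := WithLp.toLp 2 (fun i => min (v i) 0) with hq
  have hqC : q ∈ C := ⟨min_le_right _ _, min_le_right _ _⟩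
  have hle : ∀ r ∈ C, dist v q ≤ dist v r := by
    intro r hr
    rw [dist_sq', dist_sq']
    apply Real.sqrt_le_sqrt
    have h0 := sq_min_le' (v 0) (r 0) hr.1
    have h1 := sq_min_le' (v 1) (r 1) hr.2
    simp only [hq, PiLp.toLp_apply]
    linarith
  have hinf : infDist v C = dist v q := by
    apply le_antisymm (infDist_le_dist_of_mem hqC)
    by_contra hlt
    push_neg at hlt
    obtain ⟨r, hrC, hrd⟩ := (infDist_lt_iff ⟨q, hqC⟩).mp hlt
    exact absurd hrd (not_lt.mpr (hle r hrC))
  obtain ⟨hpC, hpd⟩ := hp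
  rw [hinf] at hpd
  rw [dist_sq', dist_sq'] at hpd
  have hnn : ∀ a b : ℝ, 0 ≤ a^2 + b^2 := fun a b => by positivity
  have hsum : (v 0 - p 0)^2 + (v 1 - p 1)^2
      = (v 0 - q 0)^2 + (v 1 - q 1)^2 :=
    (Real.sqrt_inj (hnn _ _) (hnn _ _)).mp hpd
  have h0 := sq_min_le' (v 0) (p 0) hpC.1
  have h1 := sq_min_le' (v 1) (p 1) hpC.2
  have e0 : (v 0 - p 0)^2 = (v 0 - min (v 0) 0)^2 := by
    simp only [hq, PiLp.toLp_apply] at hsum; linarith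
  have e1 : (v 1 - p 1)^2 = (v 1 - min (v 1) 0)^2 := by
    simp only [hq, PiLp.toLp_apply] at hsum; linarith
  intro i
  fin_cases i
  · exact eq_min_of_sq' _ _ hpC.1 e0
  · exact eq_min_of_sq' _ _ hpC.2 e1

lemma refl_C1 (v y : EuclideanSpace ℝ (Fin 2))
    (hy : y ∈ reflSet {v : EuclideanSpace ℝ (Fin 2) | 0 ≤ v 0 ∧ 0 ≤ v 1} v) :
    ∀ i, y i = |v i| := by
  obtain ⟨p, hp, rfl⟩ := hy
  intro i
  have hpi := proj_C1 v p hp i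
  have : ((2 : ℝ) • p - v) i = 2 * p i - v i := by
    simp [PiLp.sub_apply, PiLp.smul_apply, smul_eq_mul]
  rw [this, hpi]
  rcases le_total (v i) 0 with h|h
  · rw [max_eq_right h, abs_of_nonpos h]; ring
  · rw [max_eq_left h, abs_of_nonneg h]; ring

lemma refl_C2 (v y : EuclideanSpace ℝ (Fin 2))
    (hy : y ∈ reflSet {v : EuclideanSpace ℝ (Fin 2) | v 0 ≤ 0 ∧ v 1 ≤ 0} v) :
    ∀ i, y i = -|v i| := by
  obtain ⟨p, hp, rfl⟩ := hy
  intro i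
  have hpi := proj_C2 v p hp i
  have : ((2 : ℝ) • p - v) i = 2 * p i - v i := by
    simp [PiLp.sub_apply, PiLp.smul_apply, smul_eq_mul]
  rw [this, hpi]
  rcases le_total (v i) 0 with h|h
  · rw [min_eq_left h, abs_of_nonpos h]; ring
  · rw [min_eq_right h, abs_of_nonneg h]; ring

/-- alternating reflections across the nonnegative and nonpositive
orthants of ℝ² cycle between `(|ζ|,|ξ|)` and `(-|ζ|,-|ξ|)` and do not converge. -/
theorem alternating_reflections_cycle
    (x₀ : EuclideanSpace ℝ (Fin 2)) (hx₀ : x₀ ≠ 0)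
    (x : ℕ → EuclideanSpace ℝ (Fin 2)) (hinit : x 0 = x₀)
    (hC1 : ∀ n, Even n →
      x (n + 1) ∈ reflSet {v : EuclideanSpace ℝ (Fin 2) | 0 ≤ v 0 ∧ 0 ≤ v 1} (x n))
    (hC2 : ∀ n, ¬ Even n →
      x (n + 1) ∈ reflSet {v : EuclideanSpace ℝ (Fin 2) | v 0 ≤ 0 ∧ v 1 ≤ 0} (x n)) :
    (∀ n, x (2 * n + 1) = (WithLp.toLp 2 (fun i => |x₀ i|) : EuclideanSpace ℝ (Fin 2)) ∧
      x (2 * n + 2) = -(WithLp.toLp 2 (fun i => |x₀ i|) : EuclideanSpace ℝ (Fin 2))) ∧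
    ¬ ∃ l : EuclideanSpace ℝ (Fin 2), Tendsto x atTop (nhds l) := by
  set a : EuclideanSpace ℝ (Fin 2) := WithLp.toLp 2 (fun i => |x₀ i|) with ha
  have hai : ∀ i, a i = |x₀ i| := fun i => rfl
  have hnai : ∀ i, (-a) i = -|x₀ i| := fun i => by
    simp [PiLp.neg_apply, hai]
  have key : ∀ n, x (2 * n + 1) = a ∧ x (2 * n + 2) = -a := by
    intro n
    induction n with
    | zero =>
      have h1 : x 1 = a := by
        have := refl_C1 (x 0) (x 1) (hC1 0 Even.zero)
        ext i
        rw [this i, hinit, hai]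
      refine ⟨h1, ?_⟩
      have := refl_C2 (x 1) (x 2) (hC2 1 (by decide))
      ext i
      rw [this i, h1, hnai, hai, abs_abs]
    | succ n ih =>
      have hodd : x (2 * (n + 1) + 1) = a := by
        have heven : Even (2 * n + 2) := by exact ⟨n + 1, by ring⟩
        have := refl_C1 (x (2 * n + 2)) (x (2 * n + 3)) (hC1 (2 * n + 2) heven)
        have h23 : 2 * (n + 1) + 1 = 2 * n + 3 := by ring
        rw [h23]
        ext i
        rw [this i, ih.2, hnai, hai, abs_neg, abs_abs]
      refine ⟨hodd, ?_⟩
      have hnodd : ¬ Even (2 * n + 3) := by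
        simp [Nat.even_add_one, parity_simps]
      have := refl_C2 (x (2 * n + 3)) (x (2 * n + 4)) (hC2 (2 * n + 3) hnodd)
      have h24 : 2 * (n + 1) + 2 = 2 * n + 4 := by ring
      have h23 : 2 * (n + 1) + 1 = 2 * n + 3 := by ring
      rw [h24]
      ext i
      rw [this i, ← h23, hodd, hnai, hai, abs_abs]
  refine ⟨key, ?_⟩
  rintro ⟨l, hl⟩
  have hane : a ≠ -a := by
    intro h
    apply hx₀
    ext i
    have := congrArg (fun v : EuclideanSpace ℝ (Fin 2) => v i) h
    have hi : |x₀ i| = -|x₀ i| := by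
      simpa [hai, hnai] using congrArg (fun v : EuclideanSpace ℝ (Fin 2) => v i) h
    have : |x₀ i| = 0 := by linarith [abs_nonneg (x₀ i)]
    simpa [abs_eq_zero] using this
  have hmono1 : Tendsto (fun n : ℕ => 2 * n + 1) atTop atTop :=
    tendsto_atTop_mono (fun n => (show n ≤ 2*n+1 by omega)) tendsto_id
  have hmono2 : Tendsto (fun n : ℕ => 2 * n + 2) atTop atTop :=
    tendsto_atTop_mono (fun n => (show n ≤ 2*n+2 by omega)) tendsto_id
  have h1 : Tendsto (fun n : ℕ => x (2 * n + 1)) atTop (nhds l) := hl.comp hmono1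
  have h2 : Tendsto (fun n : ℕ => x (2 * n + 2)) atTop (nhds l) := hl.comp hmono2
  have e1 : (fun n : ℕ => x (2 * n + 1)) = fun _ => a := funext fun n => (key n).1
  have e2 : (fun n : ℕ => x (2 * n + 2)) = fun _ => -a := funext fun n => (key n).2
  rw [e1] at h1
  rw [e2] at h2
  exact hane ((tendsto_nhds_unique h1 tendsto_const_nhds).symm.trans
    (tendsto_nhds_unique h2 tendsto_const_nhds))
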